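/- For the Lie algebra (ℝ⁶, μ_t) with μ_t(e₁,e₂) = √t e₅, μ_t(e₁,e₄) = (1/√t) e₆, μ_t(e₂,e₃) = −(1/√t) e₆, μ_t(e₃,e₄) = −√t e₅, t ∈ (0,1], the Ricci operator of the left-invariant metric making e₁,…,e₆ orthonormal is Ric = diag(−(t²+1)/(2t), −(t²+1)/(2t), −(t²+1)/(2t), −(t²+1)/(2t), t, 1/t). -/

import Mathlib

set_option maxHeartbeats 2000000


open Real

/-- The bracket `μ_t` on `ℝ⁶` (cf. the table: `μ_t(e₁,e₂) = √t e₅`,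
`μ_t(e₁,e₄) = (1/√t) e₆`, `μ_t(e₂,e₃) = −(1/√t) e₆`, `μ_t(e₃,e₄) = −√t e₅`). -/
noncomputable def muT (t : ℝ) (X Y : Fin 6 → ℝ) : Fin 6 → ℝ :=
  ![0, 0, 0, 0,
    Real.sqrt t * (X 0 * Y 1 - X 1 * Y 0) - Real.sqrt t * (X 2 * Y 3 - X 3 * Y 2),
    (1 / Real.sqrt t) * (X 0 * Y 3 - X 3 * Y 0)
      - (1 / Real.sqrt t) * (X 1 * Y 2 - X 2 * Y 1)]

/-- Standard basis vector of `ℝ⁶`. -/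
def eb (i : Fin 6) : Fin 6 → ℝ := fun j => if j = i then 1 else 0

/-- The Ricci quadratic form `⟨Ric X, X⟩` of the left-invariant metric making
`e₁,…,e₆` orthonormal:
`⟨Ric X, X⟩ = −(1/2) ∑ᵢⱼ ⟨μ(X,eᵢ),eⱼ⟩² + (1/4) ∑ᵢⱼ ⟨μ(eᵢ,eⱼ),X⟩²`. -/
noncomputable def ricQ (t : ℝ) (X : Fin 6 → ℝ) : ℝ :=
  -(1 / 2) * ∑ i : Fin 6, ∑ j : Fin 6, (muT t X (eb i) j) ^ 2
    + (1 / 4) * ∑ i : Fin 6, ∑ j : Fin 6,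
        (∑ k : Fin 6, muT t (eb i) (eb j) k * X k) ^ 2

lemma muT0 (t : ℝ) (X Y : Fin 6 → ℝ) : muT t X Y 0 = 0 := rfl
lemma muT1 (t : ℝ) (X Y : Fin 6 → ℝ) : muT t X Y 1 = 0 := rfl
lemma muT2 (t : ℝ) (X Y : Fin 6 → ℝ) : muT t X Y 2 = 0 := rfl
lemma muT3 (t : ℝ) (X Y : Fin 6 → ℝ) : muT t X Y 3 = 0 := rfl
lemma muT4 (t : ℝ) (X Y : Fin 6 → ℝ) : muT t X Y 4 =
    Real.sqrt t * (X 0 * Y 1 - X 1 * Y 0) - Real.sqrt t * (X 2 * Y 3 - X 3 * Y 2) := rfl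
lemma muT5 (t : ℝ) (X Y : Fin 6 → ℝ) : muT t X Y 5 =
    (1 / Real.sqrt t) * (X 0 * Y 3 - X 3 * Y 0)
      - (1 / Real.sqrt t) * (X 1 * Y 2 - X 2 * Y 1) := rfl

/-- the Ricci operator of `(ℝ⁶, μ_t)` with the standard metric is
`diag(−(t²+1)/(2t), −(t²+1)/(2t), −(t²+1)/(2t), −(t²+1)/(2t), t, 1/t)`
(stated via the associated quadratic form). -/
theorem stmt9 (t : ℝ) (ht : t ∈ Set.Ioc (0 : ℝ) 1) :
    ∀ X : Fin 6 → ℝ, ricQ t X =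
      ∑ k : Fin 6,
        (![-(t ^ 2 + 1) / (2 * t), -(t ^ 2 + 1) / (2 * t),
           -(t ^ 2 + 1) / (2 * t), -(t ^ 2 + 1) / (2 * t), t, 1 / t] k)
          * (X k) ^ 2 := by
  intro X
  obtain ⟨ht0, ht1⟩ := ht
  have hs : Real.sqrt t ≠ 0 := ne_of_gt (Real.sqrt_pos.mpr ht0)
  have hs2 : Real.sqrt t ^ 2 = t := Real.sq_sqrt ht0.le
  have ht0' : t ≠ 0 := ne_of_gt ht0
  simp only [ricQ, Fin.sum_univ_six, muT0, muT1, muT2, muT3, muT4, muT5]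
  simp (config := { decide := true }) [eb]
  have h5 : ∀ a b c : ℝ, (![a, a, a, a, b, c] : Fin 6 → ℝ) 5 = c := fun a b c => rfl
  set s := Real.sqrt t with hdef
  rw [← hs2]
  field_simp
  ring
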